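/- Let L > 0, k₀ ≥ 1, φ even nonnegative in L¹(ℝ) with ∫φ = 1, φ̂(k₀/L) < 0, and φ̂(k/L) ≥ 0 for all k ∈ ℕ, k ≠ k₀. Let μ > μ* := (4π²k₀²/L²)/|φ̂(k₀/L)| and λ_μ = (1 − μφ̂(k₀/L))/(4π²k₀²/L² + 1). If u is an even L-periodic C² solution of −λ_μ u'' + λ_μ u = u − μ(φ*u), then u is a scalar multiple of cos(2πk₀x/L). -/

import Mathlib

open Real MeasureTheory

open Real MeasureTheory intervalIntegral Set Function

-- helper 1: odd function integrates to zero over a symmetric interval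
lemma odd_int_zero {f : ℝ → ℝ} {c : ℝ} (hf : Continuous f) (ho : ∀ x, f (-x) = - f x) :
    ∫ x in (-c)..c, f x = 0 := by
  have h1 : (∫ x in (-c)..(0:ℝ), f x) = - ∫ x in (0:ℝ)..c, f x := by
    have := intervalIntegral.integral_comp_neg (a := (0:ℝ)) (b := c) f
    rw [neg_zero] at this
    rw [← this]
    simp_rw [ho]
    rw [intervalIntegral.integral_neg]
  rw [← intervalIntegral.integral_add_adjacent_intervals
    (hf.intervalIntegrable _ _) (hf.intervalIntegrable _ _), h1, neg_add_cancel]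

-- helper 2: a continuous function on the circle with vanishing Fourier coefficients is zero
lemma fourier_unique {T : ℝ} [hT : Fact (0 < T)] (F : C(AddCircle T, ℂ))
    (h : ∀ n : ℤ, fourierCoeff (⇑F) n = 0) : ∀ z, F z = 0 := by
  have hsum : Summable (fourierCoeff (⇑F)) := by
    have : fourierCoeff (⇑F) = fun _ => (0:ℂ) := funext h
    rw [this]; exact summable_zero
  have := hasSum_fourier_series_of_summable (f := F) hsum
  simp only [h, zero_smul] at this
  have h0 : HasSum (fun _ : ℤ => (0 : C(AddCircle T, ℂ))) 0 := hasSum_zero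
  have : F = 0 := h0.unique this |>.symm
  intro z; rw [this]; rfl

-- helper 3: integral of cos(2πm x / L) over a period
lemma cos_per_int {L : ℝ} (hL : 0 < L) (m : ℤ) :
    ∫ x in (-(L/2))..(L/2), Real.cos (2*π*((m:ℝ)/L)*x) = if m = 0 then L else 0 := by
  rcases eq_or_ne m 0 with hm | hm
  · subst hm
    simp only [Int.cast_zero, zero_div, mul_zero, zero_mul]
    norm_num
  · rw [if_neg hm]
    have hm' : (m:ℝ) ≠ 0 := Int.cast_ne_zero.mpr hm
    have hc : (2*π*((m:ℝ)/L)) ≠ 0 :=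
      mul_ne_zero (by positivity) (div_ne_zero hm' hL.ne')
    have := intervalIntegral.integral_comp_mul_left (a := -(L/2)) (b := L/2) Real.cos hc
    rw [this, integral_cos]
    have e1 : 2*π*((m:ℝ)/L) * (L/2) = m * π := by field_simp
    have e2 : 2*π*((m:ℝ)/L) * (-(L/2)) = -(m * π) := by field_simp
    rw [e1, e2, Real.sin_neg, Real.sin_int_mul_pi]
    simp

-- helper 4: orthogonality of cosines over a period
lemma cos_cos_orth {L : ℝ} (hL : 0 < L) (k j : ℕ) (hj : 1 ≤ j) :
    ∫ x in (-(L/2))..(L/2), Real.cos (2*π*((k:ℝ)/L)*x) * Real.cos (2*π*((j:ℝ)/L)*x)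
      = if k = j then L/2 else 0 := by
  have key : ∀ x : ℝ, Real.cos (2*π*((k:ℝ)/L)*x) * Real.cos (2*π*((j:ℝ)/L)*x)
      = (Real.cos (2*π*((((k:ℤ)-(j:ℤ) : ℤ):ℝ)/L)*x) + Real.cos (2*π*((((k:ℤ)+(j:ℤ) : ℤ):ℝ)/L)*x))/2 := by
    intro x
    have h2 := Real.two_mul_cos_mul_cos (2*π*((k:ℝ)/L)*x) (2*π*((j:ℝ)/L)*x)
    have e1 : 2*π*((k:ℝ)/L)*x - 2*π*((j:ℝ)/L)*x = 2*π*((((k:ℤ)-(j:ℤ) : ℤ):ℝ)/L)*x := by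
      push_cast; ring
    have e2 : 2*π*((k:ℝ)/L)*x + 2*π*((j:ℝ)/L)*x = 2*π*((((k:ℤ)+(j:ℤ) : ℤ):ℝ)/L)*x := by
      push_cast; ring
    rw [← e1, ← e2]; linarith
  simp_rw [key]
  rw [intervalIntegral.integral_div, intervalIntegral.integral_add
    (Continuous.intervalIntegrable (by continuity) _ _)
    (Continuous.intervalIntegrable (by continuity) _ _),
    cos_per_int hL, cos_per_int hL]
  rcases eq_or_ne k j with h | h
  · subst h
    rw [if_pos rfl, if_pos (by omega), if_neg (by omega)]
    ring
  · rw [if_neg h, if_neg (by omega), if_neg (by omega)]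
    norm_num
lemma parts2 {L : ℝ} (hL : 0 < L) (k : ℕ) (u : ℝ → ℝ)
    (hc0 : Continuous u) (hc1 : Continuous (deriv u)) (hc2 : Continuous (deriv (deriv u)))
    (hd1 : ∀ x, HasDerivAt u (deriv u x) x)
    (hd2 : ∀ x, HasDerivAt (deriv u) (deriv (deriv u) x) x)
    (hup1 : Function.Periodic (deriv u) L) :
    ∫ x in (-(L/2))..(L/2), Real.cos (2*π*((k:ℝ)/L)*x) * deriv (deriv u) x
      = -(2*π*((k:ℝ)/L))^2 * ∫ x in (-(L/2))..(L/2), Real.cos (2*π*((k:ℝ)/L)*x) * u x := by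
  set ω : ℝ := 2*π*((k:ℝ)/L) with hω
  have hωb : ω * (L/2) = k * π := by rw [hω]; field_simp
  have hωa : ω * (-(L/2)) = -(k * π) := by rw [hω]; field_simp
  have hdc : ∀ x : ℝ, HasDerivAt (fun t => Real.cos (ω*t)) (-ω * Real.sin (ω*x)) x := by
    intro x
    have := (HasDerivAt.const_mul ω (hasDerivAt_id x)).cos
    convert this using 1
    show _ = -Real.sin (ω * x) * (ω * 1); ring
    rfl
  have hds : ∀ x : ℝ, HasDerivAt (fun t => Real.sin (ω*t)) (ω * Real.cos (ω*x)) x := by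
    intro x
    have := (HasDerivAt.const_mul ω (hasDerivAt_id x)).sin
    convert this using 1
    show _ = Real.cos (ω * x) * (ω * 1); ring
    rfl
  -- first integration by parts : ∫ cos * u'' = [cos u'] - ∫ (-ω sin) u'
  have step1 := intervalIntegral.integral_mul_deriv_eq_deriv_mul
    (a := -(L/2)) (b := L/2)
    (u := fun x => Real.cos (ω*x)) (u' := fun x => -ω * Real.sin (ω*x))
    (v := deriv u) (v' := deriv (deriv u))
    (fun x _ => hdc x) (fun x _ => hd2 x)
    (Continuous.intervalIntegrable (by fun_prop) _ _)
    (hc2.intervalIntegrable _ _)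
  have step2 := intervalIntegral.integral_mul_deriv_eq_deriv_mul
    (a := -(L/2)) (b := L/2)
    (u := fun x => Real.sin (ω*x)) (u' := fun x => ω * Real.cos (ω*x))
    (v := u) (v' := deriv u)
    (fun x _ => hds x) (fun x _ => hd1 x)
    (Continuous.intervalIntegrable (by fun_prop) _ _)
    (hc1.intervalIntegrable _ _)
  -- boundary terms
  have hb1 : Real.cos (ω*(L/2)) * deriv u (L/2) - Real.cos (ω*(-(L/2))) * deriv u (-(L/2)) = 0 := by
    have h1 : Real.cos (ω*(-(L/2))) = Real.cos (ω*(L/2)) := by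
      rw [hωa, hωb, Real.cos_neg]
    have h2 : deriv u (L/2) = deriv u (-(L/2)) := by
      have := hup1 (-(L/2))
      rw [show -(L/2) + L = L/2 by ring] at this
      exact this
    rw [h1, h2]; ring
  have hb2 : Real.sin (ω*(L/2)) * u (L/2) - Real.sin (ω*(-(L/2))) * u (-(L/2)) = 0 := by
    rw [hωa, hωb, Real.sin_neg, Real.sin_nat_mul_pi]; ring
  rw [step1, hb1]
  have pull1 : (∫ x in (-(L/2))..(L/2), (-ω * Real.sin (ω*x)) * deriv u x)
      = -ω * ∫ x in (-(L/2))..(L/2), Real.sin (ω*x) * deriv u x := by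
    rw [← intervalIntegral.integral_const_mul]
    congr 1; funext x; ring
  have pull2 : (∫ x in (-(L/2))..(L/2), (ω * Real.cos (ω*x)) * u x)
      = ω * ∫ x in (-(L/2))..(L/2), Real.cos (ω*x) * u x := by
    rw [← intervalIntegral.integral_const_mul]
    congr 1; funext x; ring
  rw [pull1, step2, hb2, pull2]
  ring
lemma conv_coeff {L : ℝ} (hL : 0 < L) (k : ℕ) (u φ : ℝ → ℝ)
    (hc0 : Continuous u) (hup : Function.Periodic u L) (hue : ∀ x, u (-x) = u x)
    (hφi : Integrable φ) (M : ℝ) (hM : ∀ x, |u x| ≤ M) :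
    ∫ x in (-(L/2))..(L/2), Real.cos (2*π*((k:ℝ)/L)*x) * (∫ y, φ y * u (x - y))
      = (∫ y, φ y * Real.cos (2*π*((k:ℝ)/L)*y))
        * ∫ x in (-(L/2))..(L/2), Real.cos (2*π*((k:ℝ)/L)*x) * u x := by
  set ω : ℝ := 2*π*((k:ℝ)/L) with hω
  set a : ℝ := -(L/2) with ha
  set b : ℝ := L/2 with hb
  have hab : a ≤ b := by rw [ha, hb]; linarith
  have hbaL : a + L = b := by rw [ha, hb]; ring
  set A : ℝ := ∫ x in a..b, Real.cos (ω*x) * u x with hA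
  have hM0 : 0 ≤ M := le_trans (abs_nonneg _) (hM 0)
  -- the sine coefficient vanishes
  have B0 : (∫ x in a..b, Real.sin (ω*x) * u x) = 0 := by
    rw [ha, hb]
    apply odd_int_zero (by fun_prop)
    intro x
    rw [mul_neg, Real.sin_neg, hue x, neg_mul]
  -- the sliding inner integral
  have J : ∀ y : ℝ, (∫ x in a..b, Real.cos (ω*x) * u (x - y)) = Real.cos (ω*y) * A := by
    intro y
    have hg : (∫ x in a..b, Real.cos (ω*x) * u (x-y))
        = ∫ x in a..b, (fun t => Real.cos (ω*(t+y)) * u t) (x - y) := by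
      congr 1; funext x; simp [sub_add_cancel]
    rw [hg, intervalIntegral.integral_comp_sub_right (fun t => Real.cos (ω*(t+y)) * u t) y]
    have hper : Function.Periodic (fun t => Real.cos (ω*(t+y)) * u t) L := by
      intro t
      simp only
      rw [hup t, show ω*(t+L+y) = ω*(t+y) + (k:ℝ)*(2*π) by rw [hω]; field_simp; ring,
        Real.cos_add_nat_mul_two_pi]
    have hshift := hper.intervalIntegral_add_eq (a - y) a
    rw [show a - y + L = b - y by rw [← hbaL]; ring, hbaL] at hshift
    rw [hshift]
    have expand : ∀ t : ℝ, Real.cos (ω*(t+y)) * u t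
        = Real.cos (ω*y) * (Real.cos (ω*t) * u t) - Real.sin (ω*y) * (Real.sin (ω*t) * u t) := by
      intro t
      rw [show ω*(t+y) = ω*t + ω*y by ring, Real.cos_add]
      ring
    simp_rw [expand]
    rw [intervalIntegral.integral_sub, intervalIntegral.integral_const_mul,
      intervalIntegral.integral_const_mul, B0, ← hA]
    · ring
    · exact Continuous.intervalIntegrable (by fun_prop) _ _
    · exact Continuous.intervalIntegrable (by fun_prop) _ _
  -- integrability on the product space
  have hprod : Integrable (fun z : ℝ × ℝ => Real.cos (ω*z.1) * (φ z.2 * u (z.1 - z.2)))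
      ((volume.restrict (Ioc a b)).prod volume) := by
    have hmeas : AEStronglyMeasurable (fun z : ℝ × ℝ => Real.cos (ω*z.1) * (φ z.2 * u (z.1 - z.2)))
        ((volume.restrict (Ioc a b)).prod volume) := by
      have h1 : Continuous (fun z : ℝ × ℝ => Real.cos (ω*z.1)) := by fun_prop
      have h2 : Continuous (fun z : ℝ × ℝ => u (z.1 - z.2)) := by fun_prop
      exact h1.aestronglyMeasurable.mul
        ((hφi.aestronglyMeasurable.comp_snd).mul h2.aestronglyMeasurable)
    apply Integrable.mono' (g := fun z : ℝ × ℝ => (1:ℝ) * (M * |φ z.2|)) ?_ hmeas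
    · refine Filter.Eventually.of_forall fun z => ?_
      have h1 : |Real.cos (ω*z.1)| ≤ 1 := Real.abs_cos_le_one _
      have h2 : |φ z.2 * u (z.1 - z.2)| ≤ M * |φ z.2| := by
        rw [abs_mul]
        calc |φ z.2| * |u (z.1-z.2)| ≤ |φ z.2| * M :=
          mul_le_mul_of_nonneg_left (hM _) (abs_nonneg _)
        _ = M * |φ z.2| := mul_comm _ _
      calc ‖Real.cos (ω*z.1) * (φ z.2 * u (z.1 - z.2))‖
          = |Real.cos (ω*z.1)| * |φ z.2 * u (z.1 - z.2)| := abs_mul _ _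
        _ ≤ 1 * (M * |φ z.2|) := mul_le_mul h1 h2 (abs_nonneg _) zero_le_one
    · exact Integrable.mul_prod (f := fun _ : ℝ => (1:ℝ)) (integrableOn_const (s := Ioc a b) (C := (1:ℝ)) measure_Ioc_lt_top.ne)
        (hφi.abs.const_mul M)
  -- Fubini
  have lhs1 : (∫ x in a..b, Real.cos (ω*x) * (∫ y, φ y * u (x - y)))
      = ∫ x in Ioc a b, ∫ y, Real.cos (ω*x) * (φ y * u (x - y)) := by
    rw [intervalIntegral.integral_of_le hab]
    congr 1; funext x
    rw [MeasureTheory.integral_const_mul]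
  rw [lhs1, MeasureTheory.integral_integral_swap hprod]
  have inner : ∀ y : ℝ, (∫ x in Ioc a b, Real.cos (ω*x) * (φ y * u (x - y)))
      = φ y * Real.cos (ω*y) * A := by
    intro y
    have : (∫ x in Ioc a b, Real.cos (ω*x) * (φ y * u (x - y)))
        = ∫ x in a..b, φ y * (Real.cos (ω*x) * u (x - y)) := by
      rw [intervalIntegral.integral_of_le hab]
      congr 1; funext x; ring
    rw [this, intervalIntegral.integral_const_mul, J y]
    ring
  simp_rw [inner]
  rw [show (fun y => φ y * Real.cos (ω*y) * A) = fun y => (φ y * Real.cos (ω*y)) * A by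
    funext y; ring]
  rw [MeasureTheory.integral_mul_const]

lemma even_periodic_zero {L : ℝ} (hL : 0 < L) (w : ℝ → ℝ) (hcw : Continuous w)
    (hwp : Function.Periodic w L) (hwe : ∀ x, w (-x) = w x)
    (hC : ∀ k : ℕ, (∫ x in (-(L/2))..(L/2), Real.cos (2*π*((k:ℝ)/L)*x) * w x) = 0) :
    ∀ x, w x = 0 := by
  haveI : Fact (0 < L) := ⟨hL⟩
  set a : ℝ := -(L/2) with ha
  have hab : a + L = L/2 := by rw [ha]; ring
  set W : ℝ → ℂ := fun x => (w x : ℂ) with hW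
  set F : AddCircle L → ℂ := AddCircle.liftIco L a W with hF
  have hend : W a = W (a + L) := by rw [hW]; simp only; rw [hwp a]
  have hFc : Continuous F :=
    AddCircle.liftIco_continuous hend ((Complex.continuous_ofReal.comp hcw).continuousOn)
  have hcoeff : ∀ n : ℤ, fourierCoeff F n = 0 := by
    intro n
    rw [fourierCoeff_eq_intervalIntegral F n a]
    have hint : (∫ x in a..(a + L), fourier (-n) (x : AddCircle L) • W x) = 0 := by
      have hψ : ∀ x : ℝ, fourier (-n) (x : AddCircle L) • W x
          = ((Real.cos (2*π*((n.natAbs:ℝ)/L)*x) * w x : ℝ) : ℂ)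
            + ((Real.sin (2*π*(-(n:ℝ))*x/L) * w x : ℝ) : ℂ) * Complex.I := by
        intro x
        rw [fourier_coe_apply]
        have e0 : 2 * (π:ℂ) * Complex.I * ((-n : ℤ) : ℂ) * (x:ℂ) / (L:ℂ)
            = ((2*π*(-(n:ℝ))*x/L : ℝ) : ℂ) * Complex.I := by
          push_cast
          rw [div_mul_eq_mul_div]
          ring
        rw [e0, Complex.exp_mul_I]
        have hNA : ((n.natAbs:ℝ)) = |(n:ℝ)| := by
          rw [Nat.cast_natAbs]; push_cast; rfl
        have hcos : Real.cos (2*π*(-(n:ℝ))*x/L) = Real.cos (2*π*((n.natAbs:ℝ)/L)*x) := by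
          rw [hNA]
          rcases abs_choice ((n:ℝ)) with h | h <;> rw [h]
          · rw [show (2*π*(-(n:ℝ))*x/L) = -(2*π*(((n:ℝ))/L)*x) by ring, Real.cos_neg]
          · rw [show (2*π*(-(n:ℝ))*x/L) = (2*π*((-(n:ℝ))/L)*x) by ring]
        rw [← Complex.ofReal_cos, ← Complex.ofReal_sin, hcos, smul_eq_mul]
        push_cast
        ring
      simp_rw [hψ]
      rw [intervalIntegral.integral_add
        (Continuous.intervalIntegrable (by fun_prop) _ _)
        (Continuous.intervalIntegrable (by fun_prop) _ _),
        intervalIntegral.integral_mul_const,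
        intervalIntegral.integral_ofReal, intervalIntegral.integral_ofReal]
      have hsin0 : (∫ x in a..(a+L), Real.sin (2*π*(-(n:ℝ))*x/L) * w x) = 0 := by
        rw [hab, ha]
        apply odd_int_zero (by fun_prop)
        intro x
        rw [hwe x, show 2*π*(-(n:ℝ))*(-x)/L = -(2*π*(-(n:ℝ))*x/L) by ring, Real.sin_neg]
        ring
      have hcos0 : (∫ x in a..(a+L), Real.cos (2*π*((n.natAbs:ℝ)/L)*x) * w x) = 0 := by
        rw [hab, ha]
        exact hC n.natAbs
      rw [hsin0, hcos0]
      simp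
    have hcongr : (∫ x in a..(a+L), fourier (-n) ((x:ℝ) : AddCircle L) • F ((x:ℝ) : AddCircle L))
        = ∫ x in a..(a+L), fourier (-n) ((x:ℝ) : AddCircle L) • W x := by
      rw [intervalIntegral.integral_of_le (by linarith), intervalIntegral.integral_of_le (by linarith),
        integral_Ioc_eq_integral_Ioo, integral_Ioc_eq_integral_Ioo]
      apply setIntegral_congr_fun measurableSet_Ioo
      intro x hx
      have : F ((x:ℝ) : AddCircle L) = W x := by
        rw [hF]
        exact AddCircle.liftIco_coe_apply (Ioo_subset_Ico_self hx)
      simp only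
      rw [this]
    rw [hcongr, hint, smul_zero]
  have hz := fourier_unique (T := L) (⟨F, hFc⟩ : C(AddCircle L, ℂ)) (by exact hcoeff)
  intro x
  have h1 : w (toIcoMod hL a x) = w x := by
    rw [← self_sub_toIcoDiv_zsmul hL a x]
    exact hwp.sub_zsmul_eq _
  have h2 : F ((toIcoMod hL a x : ℝ) : AddCircle L) = W (toIcoMod hL a x) := by
    rw [hF]
    exact AddCircle.liftIco_coe_apply (toIcoMod_mem_Ico hL a x)
  have h3 := hz ((toIcoMod hL a x : ℝ) : AddCircle L)
  simp only [ContinuousMap.coe_mk] at h3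
  rw [h2] at h3
  simp only [hW] at h3
  have h4 : w (toIcoMod hL a x) = 0 := by exact_mod_cast h3
  rw [← h1]
  exact h4

/-- Under the spectral assumption `φ̂(k₀/L) < 0`, `φ̂(k/L) ≥ 0` for `k ≠ k₀`, and
`μ > μ*`, any even `L`-periodic `C²` solution of `-λ_μ u'' + λ_μ u = u - μ (φ*u)`
is a scalar multiple of `cos(2πk₀x/L)`. -/
theorem stmt11 (L μ : ℝ) (k₀ : ℕ) (hL : 0 < L) (hk₀ : 1 ≤ k₀)
    (φ : ℝ → ℝ) (hφe : ∀ x, φ (-x) = φ x) (hφ0 : ∀ x, 0 ≤ φ x)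
    (hφi : Integrable φ) (hφ1 : ∫ x, φ x = 1)
    (hatφ : ℝ) (hhat : hatφ = ∫ x, φ x * Real.cos (2 * π * ((k₀ : ℝ) / L) * x))
    (hneg : hatφ < 0)
    (hpos : ∀ k : ℕ, k ≠ k₀ → 0 ≤ ∫ x, φ x * Real.cos (2 * π * ((k : ℝ) / L) * x))
    (hμ : (4 * π ^ 2 * (k₀ : ℝ) ^ 2 / L ^ 2) / |hatφ| < μ)
    (lamμ : ℝ) (hlam : lamμ = (1 - μ * hatφ) / (4 * π ^ 2 * (k₀ : ℝ) ^ 2 / L ^ 2 + 1))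
    (u : ℝ → ℝ) (hue : ∀ x, u (-x) = u x) (hup : Function.Periodic u L)
    (hu : ContDiff ℝ 2 u)
    (heq : ∀ x : ℝ, -lamμ * deriv (deriv u) x + lamμ * u x
      = u x - μ * ∫ y, φ y * u (x - y)) :
    ∃ γ : ℝ, ∀ x : ℝ, u x = γ * Real.cos (2 * π * (k₀ : ℝ) * x / L) := by
  have hπ := Real.pi_pos
  have hk₀R : (1:ℝ) ≤ (k₀:ℝ) := by exact_mod_cast hk₀
  have habs : 0 < |hatφ| := abs_pos.mpr hneg.ne
  have hμ0 : 0 < μ := lt_trans (by positivity) hμ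
  have hlam1 : 1 < lamμ := by
    rw [hlam, lt_div_iff₀ (by positivity)]
    have h2 : 4*π^2*(k₀:ℝ)^2/L^2 < μ * |hatφ| := (div_lt_iff₀ habs).mp hμ
    rw [abs_of_neg hneg] at h2
    nlinarith
  -- regularity
  have hc0 : Continuous u := hu.continuous
  have h2' : ContDiff ℝ 1 (deriv u) := by
    have := (contDiff_succ_iff_deriv (n := 1)).mp (by exact_mod_cast hu)
    exact this.2.2
  have hd1 : ∀ x, HasDerivAt u (deriv u x) x :=
    fun x => (hu.differentiable (by norm_num) x).hasDerivAt
  have hd2 : ∀ x, HasDerivAt (deriv u) (deriv (deriv u) x) x :=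
    fun x => (h2'.differentiable one_ne_zero x).hasDerivAt
  have hc1 : Continuous (deriv u) := h2'.continuous
  have hc2 : Continuous (deriv (deriv u)) := h2'.continuous_deriv le_rfl
  have hup1 : Function.Periodic (deriv u) L := by
    intro x
    have hfun : (fun y => u (y + L)) = u := funext fun y => hup y
    have h := deriv_comp_add_const u L x
    rw [hfun] at h
    exact h.symm
  -- boundedness of u
  obtain ⟨M, hM⟩ : ∃ M, ∀ x, |u x| ≤ M := by
    obtain ⟨C, hC⟩ := (isCompact_Icc (a := (0:ℝ)) (b := L)).exists_bound_of_continuousOn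
      hc0.continuousOn
    refine ⟨C, fun x => ?_⟩
    have hmem := toIcoMod_mem_Ico hL 0 x
    have heq1 : u (toIcoMod hL 0 x) = u x := by
      rw [← self_sub_toIcoDiv_zsmul hL 0 x]
      exact hup.sub_zsmul_eq _
    rw [← heq1]
    have hmem' : toIcoMod hL 0 x ∈ Icc 0 L := by
      rcases hmem with ⟨h1, h2⟩
      exact ⟨h1, by linarith [h2]⟩
    simpa using hC _ hmem'
  -- the key step : all cosine coefficients with k ≠ k₀ vanish
  have key : ∀ k : ℕ, k ≠ k₀ →
      (∫ x in (-(L/2))..(L/2), Real.cos (2*π*((k:ℝ)/L)*x) * u x) = 0 := by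
    intro k hk
    set Φ : ℝ := ∫ y, φ y * Real.cos (2*π*((k:ℝ)/L)*y) with hΦ
    set Ak : ℝ := ∫ x in (-(L/2))..(L/2), Real.cos (2*π*((k:ℝ)/L)*x) * u x with hAk
    have hP : ∀ x : ℝ, μ * (∫ y, φ y * u (x-y)) =
        u x + lamμ * deriv (deriv u) x - lamμ * u x := fun x => by linarith [heq x]
    have lhs : (∫ x in (-(L/2))..(L/2),
          Real.cos (2*π*((k:ℝ)/L)*x) * (μ * ∫ y, φ y * u (x - y)))
        = μ * (Φ * Ak) := by
      have e : ∀ x:ℝ, Real.cos (2*π*((k:ℝ)/L)*x) * (μ * ∫ y, φ y * u (x - y))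
           = μ * (Real.cos (2*π*((k:ℝ)/L)*x) * ∫ y, φ y * u (x - y)) := fun x => by ring
      simp_rw [e]
      rw [intervalIntegral.integral_const_mul,
        conv_coeff hL k u φ hc0 hup hue hφi M hM]
    have rhs : (∫ x in (-(L/2))..(L/2), Real.cos (2*π*((k:ℝ)/L)*x)
          * (u x + lamμ * deriv (deriv u) x - lamμ * u x))
        = Ak + lamμ * (-(2*π*((k:ℝ)/L))^2 * Ak) - lamμ * Ak := by
      have e : ∀ x:ℝ, Real.cos (2*π*((k:ℝ)/L)*x)
            * (u x + lamμ * deriv (deriv u) x - lamμ * u x)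
          = Real.cos (2*π*((k:ℝ)/L)*x) * u x
            + lamμ * (Real.cos (2*π*((k:ℝ)/L)*x) * deriv (deriv u) x)
            - lamμ * (Real.cos (2*π*((k:ℝ)/L)*x) * u x) := fun x => by ring
      simp_rw [e]
      rw [intervalIntegral.integral_sub, intervalIntegral.integral_add,
        intervalIntegral.integral_const_mul, intervalIntegral.integral_const_mul,
        parts2 hL k u hc0 hc1 hc2 hd1 hd2 hup1]
      · exact Continuous.intervalIntegrable (by fun_prop) _ _
      · exact Continuous.intervalIntegrable (by fun_prop) _ _
      · exact Continuous.intervalIntegrable (by fun_prop) _ _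
      · exact Continuous.intervalIntegrable (by fun_prop) _ _
    have hE : μ * (Φ * Ak) = Ak + lamμ * (-(2*π*((k:ℝ)/L))^2 * Ak) - lamμ * Ak := by
      rw [← lhs, ← rhs]
      apply intervalIntegral.integral_congr
      intro x _
      simp only
      rw [hP x]
    have hΦ0 : 0 ≤ Φ := by rw [hΦ]; exact hpos k hk
    have hbr : 0 < lamμ * ((2*π*((k:ℝ)/L))^2 + 1) - 1 + μ * Φ := by
      nlinarith [sq_nonneg (2*π*((k:ℝ)/L)), mul_nonneg hμ0.le hΦ0,
        mul_nonneg (by linarith : (0:ℝ) ≤ lamμ - 1) (sq_nonneg (2*π*((k:ℝ)/L)))]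
    have h0 : Ak * (lamμ * ((2*π*((k:ℝ)/L))^2 + 1) - 1 + μ * Φ) = 0 := by
      linear_combination hE
    exact (mul_eq_zero.mp h0).resolve_right hbr.ne'
  -- conclude via completeness of the Fourier basis
  set Ak₀ : ℝ := ∫ x in (-(L/2))..(L/2), Real.cos (2*π*((k₀:ℝ)/L)*x) * u x with hAk₀
  refine ⟨2 * Ak₀ / L, ?_⟩
  set γ : ℝ := 2 * Ak₀ / L with hγ
  set w : ℝ → ℝ := fun x => u x - γ * Real.cos (2*π*((k₀:ℝ)/L)*x) with hw
  have hcw : Continuous w := by rw [hw]; fun_prop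
  have hwp : Function.Periodic w L := by
    intro x
    simp only [hw]
    rw [hup x, show 2*π*((k₀:ℝ)/L)*(x+L) = 2*π*((k₀:ℝ)/L)*x + (k₀:ℝ)*(2*π) by
      field_simp, Real.cos_add_nat_mul_two_pi]
  have hwe : ∀ x, w (-x) = w x := by
    intro x
    simp only [hw]
    rw [hue x, show 2*π*((k₀:ℝ)/L)*(-x) = -(2*π*((k₀:ℝ)/L)*x) by ring, Real.cos_neg]
  have hCw : ∀ k : ℕ, (∫ x in (-(L/2))..(L/2), Real.cos (2*π*((k:ℝ)/L)*x) * w x) = 0 := by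
    intro k
    simp only [hw]
    have e : ∀ x:ℝ, Real.cos (2*π*((k:ℝ)/L)*x) * (u x - γ * Real.cos (2*π*((k₀:ℝ)/L)*x))
        = Real.cos (2*π*((k:ℝ)/L)*x) * u x
          - γ * (Real.cos (2*π*((k:ℝ)/L)*x) * Real.cos (2*π*((k₀:ℝ)/L)*x)) := fun x => by ring
    simp_rw [e]
    rw [intervalIntegral.integral_sub (Continuous.intervalIntegrable (by fun_prop) _ _)
      (Continuous.intervalIntegrable (by fun_prop) _ _),
      intervalIntegral.integral_const_mul, cos_cos_orth hL k k₀ hk₀]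
    rcases eq_or_ne k k₀ with rfl | hk
    · rw [if_pos rfl, ← hAk₀, hγ]
      field_simp; ring
    · rw [if_neg hk, key k hk]
      ring
  have hz := even_periodic_zero hL w hcw hwp hwe hCw
  intro x
  have h := hz x
  simp only [hw] at h
  have harg : 2*π*((k₀:ℝ)/L)*x = 2 * π * (k₀:ℝ) * x / L := by ring
  rw [harg] at h
  linarith
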